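/- Let k ≥ 1 be an integer, γ = π/(6k), f₁(t) = sin t − cos t, f₂(t) = −sin t − cos t, and define S₂'(k) = ∑_{i=k+1}^{2k} (f₁(iγ) − f₁((i−1)γ)) · (f₂(6kγ) − f₂((4k+i)γ)). Then there is an absolute constant K such that for every k ≥ 1, | S₂'(k) − (√3 − 5/4 − π/12) | ≤ K/k. -/

import Mathlib

open Real

/-- `f₁(t) = sin t − cos t`. -/
noncomputable def f1 (t : ℝ) : ℝ := Real.sin t - Real.cos t

/-- `f₂(t) = −sin t − cos t`. -/
noncomputable def f2 (t : ℝ) : ℝ := -Real.sin t - Real.cos t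

/-- `f₃(t) = −sin t + cos t`. -/
noncomputable def f3 (t : ℝ) : ℝ := -Real.sin t + Real.cos t

/-- The angle `γ = π/(6k)`. -/
noncomputable def gam (k : ℕ) : ℝ := Real.pi / (6 * k)

/-- The sum `S₂'(k)`. -/
noncomputable def S2' (k : ℕ) : ℝ :=
  ∑ i ∈ Finset.Icc (k + 1) (2 * k),
    (f1 ((i : ℝ) * gam k) - f1 (((i : ℝ) - 1) * gam k)) *
      (f2 ((6 * (k : ℝ)) * gam k) - f2 ((4 * (k : ℝ) + (i : ℝ)) * gam k))

lemma f2_pi : f2 Real.pi = 1 := by simp [f2]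

/-- Telescoping sums over `Icc (m+1) n`. -/
lemma tele (F : ℕ → ℝ) : ∀ n m : ℕ, m ≤ n →
    ∑ i ∈ Finset.Icc (m + 1) n, (F i - F (i - 1)) = F n - F m := by
  intro n
  induction n with
  | zero =>
    intro m hm
    have h0 : m = 0 := by omega
    subst h0
    simp
  | succ n ih =>
    intro m hm
    rcases Nat.lt_or_ge m (n + 1) with h | h
    · rw [Finset.sum_Icc_succ_top (by omega : m + 1 ≤ n + 1), ih m (by omega)]
      have h1 : n + 1 - 1 = n := rfl
      rw [h1]
      ring
    · have h2 : m = n + 1 := by omega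
      subst h2
      rw [Finset.Icc_eq_empty (by omega)]
      simp

/-- The per-term trigonometric identity, multiplied through by `2 cos h`. -/
lemma key_identity (x h p r : ℝ) (hr : r ^ 2 = 3) (hsp : Real.sin p = 1 / 2)
    (hcp : Real.cos p = r / 2) :
    2 * Real.cos h * ((f1 x - f1 (x - 2 * h)) * (1 - f2 (x + 4 * p)))
      = 2 * Real.cos h * (f1 x - f1 (x - 2 * h))
        + (Real.cos (2 * x + 4 * p - 3 * h) - Real.cos (2 * (x + 2 * h) + 4 * p - 3 * h))
        + 2 * Real.cos h * (2 * Real.sin h * Real.sin (h + 7 * p)) := by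
  have hx := Real.sin_sq_add_cos_sq x
  have hh := Real.sin_sq_add_cos_sq h
  rw [show x - 2 * h = x - (h + h) by ring,
      show x + 4 * p = x + (p + p + p + p) by ring,
      show 2 * x + 4 * p - 3 * h = x + x + (p + p + p + p) - (h + h + h) by ring,
      show 2 * (x + 2 * h) + 4 * p - 3 * h = x + x + (p + p + p + p) + h by ring,
      show h + 7 * p = h + (p + p + p + p + p + p + p) by ring]
  simp only [f1, f2, Real.sin_add, Real.cos_add, Real.sin_sub, Real.cos_sub, hsp, hcp]
  linear_combination ((1/16)*Real.cos h + (1/2)*Real.cos h*r + (-3/8)*Real.cos h*r^2 + (-1/2)*Real.cos h*r^3 + (1/16)*Real.cos h*r^4 + (-1/16)*Real.cos h^3 + (-1/2)*Real.cos h^3*r + (3/8)*Real.cos h^3*r^2 + (1/2)*Real.cos h^3*r^3 + (-1/16)*Real.cos h^3*r^4 + (-1/4)*Real.sin h*r + (1/4)*Real.sin h*r^3 + (1/4)*Real.sin h*Real.cos h^2 + (1/4)*Real.sin h*Real.cos h^2*r + (-3/2)*Real.sin h*Real.cos h^2*r^2 + (-1/4)*Real.sin h*Real.cos h^2*r^3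 + (1/4)*Real.sin h*Real.cos h^2*r^4 + (-1/16)*Real.sin h^2*Real.cos h + (1/2)*Real.sin h^2*Real.cos h*r + (3/8)*Real.sin h^2*Real.cos h*r^2 + (-1/2)*Real.sin h^2*Real.cos h*r^3 + (-1/16)*Real.sin h^2*Real.cos h*r^4 + (1/4)*Real.sin h^3*r + (-1/4)*Real.sin h^3*r^3) * hx + ((-1/16)*Real.cos h + (23/32)*Real.cos h*r + (3/8)*Real.cos h*r^2 + (-51/32)*Real.cos h*r^3 + (-1/16)*Real.cos h*r^4 + (21/32)*Real.cos h*r^5 + (-1/32)*Real.cos h*r^7 + (1/4)*Real.sin h*r + (-1/4)*Real.sin h*r^3 + (1/8)*Real.cos x^2*Real.cos h + (-3/4)*Real.cos x^2*Real.cos h*r^2 + (1/8)*Real.cos x^2*Real.cos h*r^4 + (-1/2)*Real.cos x^2*Real.sin h*r + (1/2)*Real.cos x^2*Real.sin h*r^3 + (1/2)*Real.sin x*Real.cos x*Real.cos h*r + (-1/2)*Real.sin x*Real.cos x*Real.cos h*r^3 + (1/8)*Real.sin x*Real.cos x*Real.sin h + (-3/4)*Real.sin x*Real.cos x*Real.sin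 h*r^2 + (1/8)*Real.sin x*Real.cos x*Real.sin h*r^4) * hh + ((-13/32)*Real.cos h*r + (9/16)*Real.cos h*r^3 + (-1/32)*Real.cos h*r^5 + (13/32)*Real.cos h^3*r + (-9/16)*Real.cos h^3*r^3 + (1/32)*Real.cos h^3*r^5 + (-3/32)*Real.sin h*Real.cos h^2 + (11/16)*Real.sin h*Real.cos h^2*r^2 + (-7/32)*Real.sin h*Real.cos h^2*r^4) * hr

set_option maxHeartbeats 1000000 in
/-- Exact closed form for `2 cos(γ/2) · S₂'(k)`. -/
lemma closed_form (k : ℕ) (hk : 1 ≤ k) :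
    2 * Real.cos (gam k / 2) * S2' k
      = 2 * Real.cos (gam k / 2) * (Real.sqrt 3 - 1)
        + (-Real.cos (gam k / 2) - Real.cos (4 * Real.pi / 3 + gam k / 2))
        + (k : ℝ) * (2 * Real.cos (gam k / 2) *
            (2 * Real.sin (gam k / 2) * Real.sin (gam k / 2 + 7 * (Real.pi / 6)))) := by
  have hk0 : (k : ℝ) ≠ 0 := Nat.cast_ne_zero.mpr (by omega)
  have hkγ : (k : ℝ) * gam k = Real.pi / 6 := by
    simp only [gam]; field_simp
  have hr : Real.sqrt 3 ^ 2 = 3 := Real.sq_sqrt (by norm_num)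
  have hsp : Real.sin (Real.pi / 6) = 1 / 2 := Real.sin_pi_div_six
  have hcp : Real.cos (Real.pi / 6) = Real.sqrt 3 / 2 := Real.cos_pi_div_six
  rw [S2', Finset.mul_sum]
  set γ := gam k with hγdef
  have h6 : 6 * (k : ℝ) * γ = Real.pi := by linear_combination 6 * hkγ
  have step1 : ∀ i ∈ Finset.Icc (k + 1) (2 * k),
      2 * Real.cos (γ / 2) *
        ((f1 ((i : ℝ) * γ) - f1 (((i : ℝ) - 1) * γ)) *
          (f2 (6 * (k : ℝ) * γ) - f2 ((4 * (k : ℝ) + (i : ℝ)) * γ)))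
      = (2 * Real.cos (γ / 2) * (f1 ((i : ℝ) * γ) - f1 ((i : ℝ) * γ - 2 * (γ / 2)))
          + (Real.cos (2 * ((i : ℝ) * γ) + 4 * (Real.pi / 6) - 3 * (γ / 2))
            - Real.cos (2 * ((i : ℝ) * γ + 2 * (γ / 2)) + 4 * (Real.pi / 6) - 3 * (γ / 2)))
          + 2 * Real.cos (γ / 2) *
              (2 * Real.sin (γ / 2) * Real.sin (γ / 2 + 7 * (Real.pi / 6)))) := by
    intro i _
    rw [h6, show (4 * (k : ℝ) + (i : ℝ)) * γ = (i : ℝ) * γ + 4 * (Real.pi / 6) by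
        linear_combination 4 * hkγ,
      f2_pi, show ((i : ℝ) - 1) * γ = (i : ℝ) * γ - 2 * (γ / 2) by ring]
    exact key_identity ((i : ℝ) * γ) (γ / 2) (Real.pi / 6) (Real.sqrt 3) hr hsp hcp
  rw [Finset.sum_congr rfl step1]
  rw [Finset.sum_add_distrib, Finset.sum_add_distrib, Finset.sum_const, Nat.card_Icc,
    show 2 * k + 1 - (k + 1) = k by omega, nsmul_eq_mul]
  -- first telescoping sum
  have e1 : ∑ i ∈ Finset.Icc (k + 1) (2 * k),
      2 * Real.cos (γ / 2) * (f1 ((i : ℝ) * γ) - f1 ((i : ℝ) * γ - 2 * (γ / 2)))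
      = 2 * Real.cos (γ / 2) * ∑ i ∈ Finset.Icc (k + 1) (2 * k),
          ((fun j : ℕ => f1 ((j : ℝ) * γ)) i - (fun j : ℕ => f1 ((j : ℝ) * γ)) (i - 1)) := by
    rw [Finset.mul_sum]
    refine Finset.sum_congr rfl fun i hi => ?_
    have hi1 : k + 1 ≤ i := (Finset.mem_Icc.mp hi).1
    have harg : (i : ℝ) * γ - 2 * (γ / 2) = (((i - 1 : ℕ)) : ℝ) * γ := by
      rw [Nat.cast_sub (by omega)]
      push_cast
      ring
    rw [harg]
  have t1 : ∑ i ∈ Finset.Icc (k + 1) (2 * k),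
      ((fun j : ℕ => f1 ((j : ℝ) * γ)) i - (fun j : ℕ => f1 ((j : ℝ) * γ)) (i - 1))
      = f1 (((2 * k : ℕ) : ℝ) * γ) - f1 ((k : ℝ) * γ) :=
    tele (fun j : ℕ => f1 ((j : ℝ) * γ)) (2 * k) k (by omega)
  have endv : f1 (((2 * k : ℕ) : ℝ) * γ) - f1 ((k : ℝ) * γ) = Real.sqrt 3 - 1 := by
    rw [show (((2 * k : ℕ)) : ℝ) * γ = Real.pi / 3 by push_cast; linear_combination 2 * hkγ,
      show (k : ℝ) * γ = Real.pi / 6 from hkγ]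
    simp only [f1, Real.sin_pi_div_three, Real.cos_pi_div_three, hsp, hcp]
    ring
  -- second telescoping sum
  have e2 : ∑ i ∈ Finset.Icc (k + 1) (2 * k),
      (Real.cos (2 * ((i : ℝ) * γ) + 4 * (Real.pi / 6) - 3 * (γ / 2))
        - Real.cos (2 * ((i : ℝ) * γ + 2 * (γ / 2)) + 4 * (Real.pi / 6) - 3 * (γ / 2)))
      = ∑ i ∈ Finset.Icc (k + 1) (2 * k),
          ((fun j : ℕ => -Real.cos (2 * ((((j + 1 : ℕ)) : ℝ) * γ) + 4 * (Real.pi / 6)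
              - 3 * (γ / 2))) i
            - (fun j : ℕ => -Real.cos (2 * ((((j + 1 : ℕ)) : ℝ) * γ) + 4 * (Real.pi / 6)
              - 3 * (γ / 2))) (i - 1)) := by
    refine Finset.sum_congr rfl fun i hi => ?_
    have hi1 : k + 1 ≤ i := (Finset.mem_Icc.mp hi).1
    show Real.cos (2 * ((i : ℝ) * γ) + 4 * (Real.pi / 6) - 3 * (γ / 2))
        - Real.cos (2 * ((i : ℝ) * γ + 2 * (γ / 2)) + 4 * (Real.pi / 6) - 3 * (γ / 2))
      = -Real.cos (2 * ((((i + 1 : ℕ)) : ℝ) * γ) + 4 * (Real.pi / 6) - 3 * (γ / 2))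
        - -Real.cos (2 * ((((i - 1 + 1 : ℕ)) : ℝ) * γ) + 4 * (Real.pi / 6) - 3 * (γ / 2))
    rw [show i - 1 + 1 = i from by omega,
      show 2 * ((i : ℝ) * γ + 2 * (γ / 2)) + 4 * (Real.pi / 6) - 3 * (γ / 2)
        = 2 * ((((i + 1 : ℕ)) : ℝ) * γ) + 4 * (Real.pi / 6) - 3 * (γ / 2) by push_cast; ring]
    ring
  have t2 : ∑ i ∈ Finset.Icc (k + 1) (2 * k),
      ((fun j : ℕ => -Real.cos (2 * ((((j + 1 : ℕ)) : ℝ) * γ) + 4 * (Real.pi / 6)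
          - 3 * (γ / 2))) i
        - (fun j : ℕ => -Real.cos (2 * ((((j + 1 : ℕ)) : ℝ) * γ) + 4 * (Real.pi / 6)
          - 3 * (γ / 2))) (i - 1))
      = -Real.cos (2 * ((((2 * k + 1 : ℕ)) : ℝ) * γ) + 4 * (Real.pi / 6) - 3 * (γ / 2))
        - -Real.cos (2 * ((((k + 1 : ℕ)) : ℝ) * γ) + 4 * (Real.pi / 6) - 3 * (γ / 2)) :=
    tele (fun j : ℕ => -Real.cos (2 * ((((j + 1 : ℕ)) : ℝ) * γ) + 4 * (Real.pi / 6)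
      - 3 * (γ / 2))) (2 * k) k (by omega)
  have endv2 : -Real.cos (2 * ((((2 * k + 1 : ℕ)) : ℝ) * γ) + 4 * (Real.pi / 6) - 3 * (γ / 2))
        - -Real.cos (2 * ((((k + 1 : ℕ)) : ℝ) * γ) + 4 * (Real.pi / 6) - 3 * (γ / 2))
      = -Real.cos (γ / 2) - Real.cos (4 * Real.pi / 3 + γ / 2) := by
    rw [show 2 * ((((2 * k + 1 : ℕ)) : ℝ) * γ) + 4 * (Real.pi / 6) - 3 * (γ / 2)
        = 4 * Real.pi / 3 + γ / 2 by push_cast; linear_combination 4 * hkγ,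
      show 2 * ((((k + 1 : ℕ)) : ℝ) * γ) + 4 * (Real.pi / 6) - 3 * (γ / 2)
        = Real.pi + γ / 2 by push_cast; linear_combination 2 * hkγ,
      Real.cos_add Real.pi (γ / 2), Real.cos_pi, Real.sin_pi]
    ring_nf
  rw [e1, t1, endv]
  rw [e2, t2, endv2]

set_option maxHeartbeats 2000000 in
theorem S2'_asymptotics :
    ∃ K : ℝ, ∀ k : ℕ, 1 ≤ k →
      |S2' k - (Real.sqrt 3 - 5 / 4 - Real.pi / 12)| ≤ K / k := by
  refine ⟨2, fun k hk => ?_⟩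
  have hk0 : (0 : ℝ) < (k : ℝ) := by exact_mod_cast Nat.pos_of_ne_zero (by omega)
  have hkne : (k : ℝ) ≠ 0 := ne_of_gt hk0
  have hk1 : (1 : ℝ) ≤ (k : ℝ) := by exact_mod_cast hk
  have hπ : (3 : ℝ) < Real.pi := Real.pi_gt_three
  have hπ4 : Real.pi ≤ 4 := Real.pi_le_four
  have hkγ : (k : ℝ) * gam k = Real.pi / 6 := by
    simp only [gam]; field_simp
  have hγpos : 0 < gam k := by
    simp only [gam]
    exact div_pos Real.pi_pos (by linarith)
  have hγle : gam k ≤ 1 := by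
    simp only [gam]
    rw [div_le_one (by linarith : (0:ℝ) < 6 * (k : ℝ))]
    linarith
  -- basic trig bounds (before abstracting)
  have hu0 : 0 ≤ Real.sin (gam k / 2) :=
    Real.sin_nonneg_of_nonneg_of_le_pi (by linarith) (by linarith)
  have hu1 : Real.sin (gam k / 2) ≤ gam k / 2 := le_of_lt (Real.sin_lt (by linarith))
  have hv1 : Real.cos (gam k / 2) ≤ 1 := Real.cos_le_one _
  have hv0 : 1 / 2 ≤ Real.cos (gam k / 2) := by
    have h := Real.cos_le_cos_of_nonneg_of_le_pi (by linarith : (0:ℝ) ≤ gam k / 2)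
      (by linarith : Real.pi / 3 ≤ Real.pi) (by linarith : gam k / 2 ≤ Real.pi / 3)
    rwa [Real.cos_pi_div_three] at h
  have hsin2 : Real.sin (gam k) = 2 * Real.sin (gam k / 2) * Real.cos (gam k / 2) := by
    rw [show gam k = 2 * (gam k / 2) by ring, Real.sin_two_mul]
    ring
  have hsinlt : Real.sin (gam k) ≤ gam k := le_of_lt (Real.sin_lt hγpos)
  have hsingt : gam k - (gam k) ^ 3 / 4 < Real.sin (gam k) := by
    have := Real.sin_gt_sub_cube hγpos
    linarith [pow_pos hγpos 3]
  have hr3 : Real.sqrt 3 ^ 2 = 3 := Real.sq_sqrt (by norm_num)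
  have hr0 : 0 ≤ Real.sqrt 3 := Real.sqrt_nonneg 3
  have hrle : Real.sqrt 3 ≤ 2 := by nlinarith
  have hc43 : Real.cos (4 * Real.pi / 3 + gam k / 2)
      = -(1 / 2) * Real.cos (gam k / 2) + Real.sqrt 3 / 2 * Real.sin (gam k / 2) := by
    rw [show 4 * Real.pi / 3 + gam k / 2 = Real.pi + (Real.pi / 3 + gam k / 2) by ring,
      Real.cos_add Real.pi, Real.cos_add (Real.pi / 3), Real.cos_pi, Real.sin_pi,
      Real.cos_pi_div_three, Real.sin_pi_div_three]
    ring
  have hs76 : Real.sin (gam k / 2 + 7 * (Real.pi / 6))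
      = -(Real.sqrt 3 / 2) * Real.sin (gam k / 2) - 1 / 2 * Real.cos (gam k / 2) := by
    rw [show gam k / 2 + 7 * (Real.pi / 6) = Real.pi + (gam k / 2 + Real.pi / 6) by ring,
      Real.sin_add Real.pi, Real.sin_add (gam k / 2), Real.cos_add (gam k / 2),
      Real.sin_pi, Real.cos_pi, Real.sin_pi_div_six, Real.cos_pi_div_six]
    ring
  have cf := closed_form k hk
  rw [hc43, hs76] at cf
  set γ := gam k with hγdef
  clear_value γ
  set u := Real.sin (γ / 2) with hudef
  clear_value u
  set v := Real.cos (γ / 2) with hvdef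
  clear_value v
  set L := Real.sqrt 3 - 5 / 4 - Real.pi / 12 with hLdef
  clear_value L
  -- the exact error term
  have hE : 2 * v * (S2' k - L)
      = (k : ℝ) * v * (γ - Real.sin γ) - Real.sqrt 3 / 2 * u
        - 2 * (k : ℝ) * Real.sqrt 3 * u ^ 2 * v := by
    rw [hsin2]
    linear_combination cf - v * hkγ - 2 * v * hLdef
  -- bounds for the three pieces
  have hks : 0 ≤ γ - Real.sin γ := by linarith
  have hA0 : 0 ≤ (k : ℝ) * v * (γ - Real.sin γ) := by positivity
  have hA1 : (k : ℝ) * v * (γ - Real.sin γ) ≤ γ / 4 := by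
    have h1 : v * (γ - Real.sin γ) ≤ γ ^ 3 / 4 := by nlinarith
    have h2 : (k : ℝ) * (v * (γ - Real.sin γ)) ≤ (k : ℝ) * (γ ^ 3 / 4) :=
      mul_le_mul_of_nonneg_left h1 (le_of_lt hk0)
    have h3 : (k : ℝ) * γ ^ 3 = Real.pi / 6 * γ ^ 2 := by linear_combination γ ^ 2 * hkγ
    have h4 : Real.pi / 6 * γ ^ 2 ≤ γ ^ 2 := by nlinarith [sq_nonneg γ]
    have h5 : γ ^ 2 ≤ γ := by nlinarith
    nlinarith
  have hB0 : 0 ≤ Real.sqrt 3 / 2 * u := by positivity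
  have hB1 : Real.sqrt 3 / 2 * u ≤ γ / 2 := by nlinarith
  have hC0 : 0 ≤ 2 * (k : ℝ) * Real.sqrt 3 * u ^ 2 * v := by positivity
  have hC1 : 2 * (k : ℝ) * Real.sqrt 3 * u ^ 2 * v ≤ γ := by
    have hu2 : u ^ 2 ≤ γ ^ 2 / 4 := by nlinarith
    have h1 : 2 * Real.sqrt 3 * u ^ 2 * v ≤ γ ^ 2 := by
      nlinarith [mul_nonneg (mul_nonneg (by positivity : (0:ℝ) ≤ 2 * Real.sqrt 3)
        (sq_nonneg u)) (by linarith : (0:ℝ) ≤ 1 - v),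
        mul_nonneg (by linarith : (0:ℝ) ≤ 2 - Real.sqrt 3) (sq_nonneg u)]
    have h2 : (k : ℝ) * (2 * Real.sqrt 3 * u ^ 2 * v) ≤ (k : ℝ) * γ ^ 2 :=
      mul_le_mul_of_nonneg_left h1 (le_of_lt hk0)
    have h3 : (k : ℝ) * γ ^ 2 = Real.pi / 6 * γ := by linear_combination γ * hkγ
    have h4 : Real.pi / 6 * γ ≤ γ := by nlinarith
    nlinarith
  have hEbound : |2 * v * (S2' k - L)| ≤ 2 * γ := by
    rw [hE, abs_le]
    constructor
    · linarith
    · linarith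
  have hfinal : |S2' k - L| ≤ 2 * γ := by
    have habs : |2 * v * (S2' k - L)| = (2 * v) * |S2' k - L| := by
      rw [abs_mul, abs_of_pos (by linarith : (0:ℝ) < 2 * v)]
    rw [habs] at hEbound
    nlinarith [abs_nonneg (S2' k - L)]
  calc |S2' k - L| ≤ 2 * γ := hfinal
  _ ≤ 2 / k := by
    rw [hγdef]
    simp only [gam]
    rw [show 2 * (Real.pi / (6 * (k : ℝ))) = (Real.pi / 3) / (k : ℝ) by ring]
    gcongr
    linarith
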